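/- arXiv:2504.11971 — 2 statements merged into one kernel-verified Lean document; each statement's English description precedes it below -/
import Mathlib

section
/- For any non-negative definite Hermitian matrix H and any antisymmetric matrix A (both n×n complex matrices), the trace tr(H A H̄ Ā) is real and satisfies tr(H A H̄ Ā) ≤ 0, where H̄ and Ā denote entrywise complex conjugation. -/
open Matrix
open scoped ComplexOrder

/-- For any non-negative definite Hermitian matrix `H` and antisymmetric matrix `A`,
`tr(H A H̄ Ā)` is real and non-positive. -/
theorem trace_HAHbarAbar_real_nonpos {n : ℕ}
    (H A : Matrix (Fin n) (Fin n) ℂ)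
    (hH : H.PosSemidef)
    (hA : Aᵀ = -A) :
    ((H * A * H.map (starRingEnd ℂ) * A.map (starRingEnd ℂ)).trace).im = 0 ∧
    ((H * A * H.map (starRingEnd ℂ) * A.map (starRingEnd ℂ)).trace).re ≤ 0 := by
  set S := (open scoped MatrixOrder in CFC.sqrt H) with hSdef
  have hS2 : S * S = H := by
    open scoped MatrixOrder in exact CFC.sqrt_mul_sqrt_self H hH.nonneg
  have hSH : Sᴴ = S := by
    open scoped MatrixOrder in exact (CFC.sqrt_nonneg H).isSelfAdjoint.star_eq
  have hHc : H.map (starRingEnd ℂ) = Hᵀ := by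
    ext i j
    have := congrFun (congrFun hH.1 j) i
    simpa [Matrix.conjTranspose_apply, Matrix.map_apply, Matrix.transpose_apply] using this
  have hAc : A.map (starRingEnd ℂ) = -Aᴴ := by
    ext i j
    have := congrFun (congrFun hA j) i
    simp only [Matrix.transpose_apply, Matrix.neg_apply] at this
    simp [Matrix.conjTranspose_apply, Matrix.map_apply, this]
  set M := S * A * Sᵀ with hM
  have hMH : Mᴴ = Sᵀ * Aᴴ * S := by
    have hSTH : Sᵀᴴ = Sᵀ := by
      ext i j
      have h := congrFun (congrFun hSH j) i
      simp only [Matrix.conjTranspose_apply] at h ⊢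
      simp [Matrix.transpose_apply, h]
    rw [hM, Matrix.conjTranspose_mul, Matrix.conjTranspose_mul, hSH, hSTH]
    rw [Matrix.mul_assoc]
  have e1 : M * Mᴴ = (S * A * Sᵀ * Sᵀ * Aᴴ) * S := by
    rw [hMH, hM]; simp only [Matrix.mul_assoc]
  have e2 : H * A * Hᵀ * Aᴴ = S * (S * A * Sᵀ * Sᵀ * Aᴴ) := by
    rw [← hS2, Matrix.transpose_mul]; simp only [Matrix.mul_assoc]
  have hTr : (H * A * H.map (starRingEnd ℂ) * A.map (starRingEnd ℂ)).trace
      = -(M * Mᴴ).trace := by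
    rw [hHc, hAc, Matrix.mul_neg, Matrix.trace_neg, e2, e1, Matrix.trace_mul_comm]
  have key : 0 ≤ (M * Mᴴ).trace := by
    rw [Matrix.trace]
    apply Finset.sum_nonneg
    intro i _
    rw [Matrix.diag_apply, Matrix.mul_apply]
    apply Finset.sum_nonneg
    intro j _
    simpa [Matrix.conjTranspose_apply] using mul_star_self_nonneg (M i j)
  rw [hTr]
  rw [Complex.le_def] at key
  constructor
  · simp [← key.2]
  · simpa using key.1
end

section
/- In double null coordinates, the quantity (r/2)(2 ∂_u r ∂_v r / Ω² + 1 + 4k²r²) obtained from the matrices Q and T of the spinorial quasilocal mass satisfies the identity (1/(16π))√(−tr(Q T⁻¹ Q̄ T̄⁻¹)) = (r/2)(2 ∂_u r ∂_v r / Ω² + 1 + 4k²r²), where Q = c·M₁ and T⁻¹ = d·M₂ with the explicit 4×4 matrices given by Q = (4r(2ab + Ω²(1+4k²r²))/Ω³)·[[a,0,0,−iκ],[0,a,iκ,0],[0,−iκ,−b,0],[iκ,0,0,−b]] and T⁻¹ = (πΩ/(ab + 2k²Ω²r²))·[[0,b,−iκ,0],[−b,0,0,−iκ],[iκ,0,0,a],[0,iκ,−a,0]],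 where a = ∂_u r, b = ∂_v r, κ = kΩr√2. -/
open Matrix

noncomputable def kappaQL (Ω r k : ℝ) : ℂ := ((k * Ω * r * Real.sqrt 2 : ℝ) : ℂ)

/-- The matrix `Q` of the spinorial quasilocal mass in double null coordinates. -/
noncomputable def Qmat (a b Ω r k : ℝ) : Matrix (Fin 4) (Fin 4) ℂ :=
  ((4 * r * (2 * a * b + Ω ^ 2 * (1 + 4 * k ^ 2 * r ^ 2)) / Ω ^ 3 : ℝ) : ℂ) •
    !![(a : ℂ), 0, 0, -Complex.I * kappaQL Ω r k;
       0, (a : ℂ), Complex.I * kappaQL Ω r k, 0;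
       0, -Complex.I * kappaQL Ω r k, ((-b : ℝ) : ℂ), 0;
       Complex.I * kappaQL Ω r k, 0, 0, ((-b : ℝ) : ℂ)]

/-- The matrix `T⁻¹` of the spinorial quasilocal mass in double null coordinates. -/
noncomputable def Tinvmat (a b Ω r k : ℝ) : Matrix (Fin 4) (Fin 4) ℂ :=
  ((Real.pi * Ω / (a * b + 2 * k ^ 2 * Ω ^ 2 * r ^ 2) : ℝ) : ℂ) •
    !![0, (b : ℂ), -Complex.I * kappaQL Ω r k, 0;
       ((-b : ℝ) : ℂ), 0, 0, -Complex.I * kappaQL Ω r k;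
       Complex.I * kappaQL Ω r k, 0, 0, (a : ℂ);
       0, Complex.I * kappaQL Ω r k, ((-a : ℝ) : ℂ), 0]

private def M1 (p q x : ℂ) : Matrix (Fin 4) (Fin 4) ℂ :=
  !![p, 0, 0, -x; 0, p, x, 0; 0, -x, -q, 0; x, 0, 0, -q]
private def M2 (p q x : ℂ) : Matrix (Fin 4) (Fin 4) ℂ :=
  !![0, q, -x, 0; -q, 0, 0, -x; x, 0, 0, p; 0, x, -p, 0]

set_option maxHeartbeats 4000000 in
private lemma trace_M (p q x : ℂ) :
    (M1 p q x * M2 p q x * M1 p q (-x) * M2 p q (-x)).trace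
      = -4 * (p * q - x ^ 2) ^ 2 := by
  simp [M1, M2, Matrix.trace, Matrix.diag, Matrix.mul_apply, Fin.sum_univ_four]
  ring

set_option maxHeartbeats 2000000 in
/-- Spherically symmetric case: with `Q` and `T⁻¹` as above (`a = ∂_u r`, `b = ∂_v r`,
`κ = kΩr√2`), one has `−tr(Q T⁻¹ Q̄ T̄⁻¹) = (16π)² (r/2)² (2ab/Ω² + 1 + 4k²r²)²`. -/
theorem spherical_trace_computation (a b Ω r k : ℝ)
    (hΩ : 0 < Ω) (hr : 0 < r) (hk : 0 < k)
    (hden : a * b + 2 * k ^ 2 * Ω ^ 2 * r ^ 2 ≠ 0) :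
    -(Qmat a b Ω r k * Tinvmat a b Ω r k * (Qmat a b Ω r k).map (starRingEnd ℂ) *
        (Tinvmat a b Ω r k).map (starRingEnd ℂ)).trace =
      (((16 * Real.pi) ^ 2 * (r / 2) ^ 2 *
        (2 * a * b / Ω ^ 2 + 1 + 4 * k ^ 2 * r ^ 2) ^ 2 : ℝ) : ℂ) := by
  set c : ℝ := 4 * r * (2 * a * b + Ω ^ 2 * (1 + 4 * k ^ 2 * r ^ 2)) / Ω ^ 3 with hc
  set d : ℝ := Real.pi * Ω / (a * b + 2 * k ^ 2 * Ω ^ 2 * r ^ 2) with hd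
  set κ : ℝ := k * Ω * r * Real.sqrt 2 with hκ
  have hQ : Qmat a b Ω r k = (c : ℂ) • M1 a b (Complex.I * κ) := by
    unfold Qmat M1 kappaQL
    congr 1
    ext i j
    fin_cases i <;> fin_cases j <;> simp [hκ] <;> push_cast <;> ring
  have hT : Tinvmat a b Ω r k = (d : ℂ) • M2 a b (Complex.I * κ) := by
    unfold Tinvmat M2 kappaQL
    congr 1
    ext i j
    fin_cases i <;> fin_cases j <;> simp [hκ] <;> push_cast <;> ring
  have hQc : (Qmat a b Ω r k).map (starRingEnd ℂ)
      = (c : ℂ) • M1 a b (-(Complex.I * κ)) := by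
    rw [hQ]
    ext i j
    fin_cases i <;> fin_cases j <;>
      simp [M1, Matrix.map_apply, Complex.conj_ofReal, mul_comm]
  have hTc : (Tinvmat a b Ω r k).map (starRingEnd ℂ)
      = (d : ℂ) • M2 a b (-(Complex.I * κ)) := by
    rw [hT]
    ext i j
    fin_cases i <;> fin_cases j <;>
      simp [M2, Matrix.map_apply, Complex.conj_ofReal, mul_comm]
  rw [hQc, hTc, hQ, hT]
  simp only [Matrix.smul_mul, Matrix.mul_smul, smul_smul, Matrix.trace_smul]
  rw [trace_M, smul_eq_mul]
  have h2 : (Real.sqrt 2 : ℝ) ^ 2 = 2 := Real.sq_sqrt (by norm_num)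
  have hκ2 : κ ^ 2 = 2 * k ^ 2 * Ω ^ 2 * r ^ 2 := by
    rw [hκ, mul_pow, h2]; ring
  have hx2 : (Complex.I * κ) ^ 2 = -((2 * k ^ 2 * Ω ^ 2 * r ^ 2 : ℝ) : ℂ) := by
    rw [mul_pow, Complex.I_sq, ← Complex.ofReal_pow, hκ2]; ring
  rw [hx2]
  have hΩ' : (Ω : ℂ) ≠ 0 := Complex.ofReal_ne_zero.mpr hΩ.ne'
  have hden' : ((a : ℂ) * b + 2 * k ^ 2 * Ω ^ 2 * r ^ 2) ≠ 0 := by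
    have := Complex.ofReal_ne_zero.mpr hden; push_cast at this; exact this
  rw [hc, hd]
  push_cast
  field_simp [hΩ', hden']
  rw [sub_neg_eq_add, mul_div_assoc, div_self (pow_ne_zero 2 (by convert hden' using 1; ring)), mul_one]
  ring
end
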